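/- arXiv:2001.07673 — 3 statements merged into one kernel-verified Lean document; each statement's English description precedes it below -/
import Mathlib

section
/- Let y*¹, y*² be minimizers of J[μ,g¹] and J[μ,g²] respectively, where J[μ,g](y) = (1/(2s))‖Ly - g‖²_{H₁} + (1/2)‖By - μ‖²_{H₂} with L, B linear. Then y := y*¹ - y*² satisfies (1/s)‖Ly‖² + ‖By‖² = (1/s)⟨g¹ - g², Ly⟩, and consequently (1/2)‖Ly‖² + s‖By‖² ≤ 2‖g¹ - g²‖². -/
open scoped RealInnerProductSpace

private lemma quad_nonneg_imp {a b : ℝ} (ha : 0 ≤ a)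
    (h : ∀ t : ℝ, 0 ≤ a * t ^ 2 + b * t) : b = 0 := by
  by_contra hb
  have hb2 : 0 < b ^ 2 := by positivity
  have ha1 : (0:ℝ) < a + 1 := by linarith
  have h1 := h (-b / (a + 1))
  have key : a * (-b / (a + 1)) ^ 2 + b * (-b / (a + 1)) = -(b ^ 2) / (a + 1) ^ 2 := by
    field_simp; ring
  rw [key] at h1
  have : 0 < b ^ 2 / (a + 1) ^ 2 := by positivity
  rw [neg_div] at h1
  linarith

private lemma expand_sq {H : Type*} [NormedAddCommGroup H] [InnerProductSpace ℝ H]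
    (x c w : H) (t : ℝ) :
    ‖(x + t • w) - c‖ ^ 2 = ‖x - c‖ ^ 2 + 2 * t * ⟪x - c, w⟫ + t ^ 2 * ‖w‖ ^ 2 := by
  have : (x + t • w) - c = (x - c) + t • w := by abel
  rw [this, norm_add_sq_real, real_inner_smul_right, norm_smul]
  simp [mul_pow]
  ring

/-- If `y*¹`, `y*²` minimize `J[μ,g¹]`, `J[μ,g²]` respectively, then
`y = y*¹ - y*²` satisfies `(1/s)‖Ly‖² + ‖By‖² = (1/s)⟨g¹ - g², Ly⟩`, and
consequently `(1/2)‖Ly‖² + s‖By‖² ≤ 2‖g¹ - g²‖²`. -/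
theorem stmt_8 {V H₁ H₂ : Type*} [AddCommGroup V] [Module ℝ V]
    [NormedAddCommGroup H₁] [InnerProductSpace ℝ H₁]
    [NormedAddCommGroup H₂] [InnerProductSpace ℝ H₂]
    (L : V →ₗ[ℝ] H₁) (B : V →ₗ[ℝ] H₂) (μ : H₂) (g₁ g₂ : H₁) (s : ℝ) (hs : 0 < s)
    (y₁ y₂ : V)
    (hmin₁ : ∀ y : V,
      (1/(2*s)) * ‖L y₁ - g₁‖ ^ 2 + (1/2) * ‖B y₁ - μ‖ ^ 2 ≤
        (1/(2*s)) * ‖L y - g₁‖ ^ 2 + (1/2) * ‖B y - μ‖ ^ 2)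
    (hmin₂ : ∀ y : V,
      (1/(2*s)) * ‖L y₂ - g₂‖ ^ 2 + (1/2) * ‖B y₂ - μ‖ ^ 2 ≤
        (1/(2*s)) * ‖L y - g₂‖ ^ 2 + (1/2) * ‖B y - μ‖ ^ 2) :
    (1/s) * ‖L (y₁ - y₂)‖ ^ 2 + ‖B (y₁ - y₂)‖ ^ 2 =
        (1/s) * ⟪g₁ - g₂, L (y₁ - y₂)⟫ ∧
    (1/2) * ‖L (y₁ - y₂)‖ ^ 2 + s * ‖B (y₁ - y₂)‖ ^ 2 ≤ 2 * ‖g₁ - g₂‖ ^ 2 := by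
  set v : V := y₁ - y₂ with hv
  have hs' : (0:ℝ) < 1/(2*s) := by positivity
  -- first-order condition for a minimizer
  have foc : ∀ (y₀ : V) (g : H₁),
      (∀ y : V, (1/(2*s)) * ‖L y₀ - g‖ ^ 2 + (1/2) * ‖B y₀ - μ‖ ^ 2 ≤
        (1/(2*s)) * ‖L y - g‖ ^ 2 + (1/2) * ‖B y - μ‖ ^ 2) →
      (1/s) * ⟪L y₀ - g, L v⟫ + ⟪B y₀ - μ, B v⟫ = 0 := by
    intro y₀ g hmin
    apply quad_nonneg_imp (a := (1/(2*s)) * ‖L v‖ ^ 2 + (1/2) * ‖B v‖ ^ 2)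
    · positivity
    · intro t
      have h := hmin (y₀ + t • v)
      have hL : L (y₀ + t • v) = L y₀ + t • L v := by simp
      have hB : B (y₀ + t • v) = B y₀ + t • B v := by simp
      rw [hL, hB, expand_sq, expand_sq] at h
      have hss : (1:ℝ)/s = 1/(2*s) * 2 := by field_simp
      rw [hss]
      nlinarith [h]
  have h₁ := foc y₁ g₁ hmin₁
  have h₂ := foc y₂ g₂ hmin₂
  have hLv : L y₁ - L y₂ = L v := by simp [hv]
  have hBv : B y₁ - B y₂ = B v := by simp [hv]
  have key : (1/s) * ‖L v‖ ^ 2 + ‖B v‖ ^ 2 = (1/s) * ⟪g₁ - g₂, L v⟫ := by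
    have e1 : ⟪L y₁ - g₁, L v⟫ - ⟪L y₂ - g₂, L v⟫ = ⟪L v, L v⟫ - ⟪g₁ - g₂, L v⟫ := by
      rw [← inner_sub_left, ← inner_sub_left]
      congr 1
      rw [← hLv]; abel
    have e2 : ⟪B y₁ - μ, B v⟫ - ⟪B y₂ - μ, B v⟫ = ⟪B v, B v⟫ := by
      rw [← inner_sub_left]
      congr 1
      rw [← hBv]; abel
    have hLn : ⟪L v, L v⟫ = ‖L v‖ ^ 2 := real_inner_self_eq_norm_sq _
    have hBn : ⟪B v, B v⟫ = ‖B v‖ ^ 2 := real_inner_self_eq_norm_sq _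
    have hz : (1/s * ⟪L y₁ - g₁, L v⟫ + ⟪B y₁ - μ, B v⟫) -
        (1/s * ⟪L y₂ - g₂, L v⟫ + ⟪B y₂ - μ, B v⟫) = 0 := by rw [h₁, h₂]; ring
    have d1 : ⟪L y₁ - g₁, L v⟫ - ⟪L y₂ - g₂, L v⟫ = ‖L v‖ ^ 2 - ⟪g₁ - g₂, L v⟫ := by
      rw [e1, hLn]
    have d2 : ⟪B y₁ - μ, B v⟫ - ⟪B y₂ - μ, B v⟫ = ‖B v‖ ^ 2 := by rw [e2, hBn]
    linear_combination hz - (1/s) * d1 - d2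
  refine ⟨key, ?_⟩
  have cs : ⟪g₁ - g₂, L v⟫ ≤ ‖g₁ - g₂‖ * ‖L v‖ := real_inner_le_norm _ _
  have keym : ‖L v‖ ^ 2 + s * ‖B v‖ ^ 2 = ⟪g₁ - g₂, L v⟫ := by
    have k := key
    field_simp at k
    linarith [k]
  nlinarith [sq_nonneg (‖g₁ - g₂‖ - ‖L v‖), hs, keym, cs, sq_nonneg ‖g₁ - g₂‖]
end

section
/- Let w : Ω × [-T,T] → ℝ with w(·,0) = 0, let L₀w ∈ C(Ω × [-T,T]) suitably integrable, and suppose the weight φ_λ satisfies ∂ₜφ_λ < 0 on (0,T) and ∂ₜφ_λ > 0 on (-T,0). Then ∫_{-T}^{T}∫_Ω ĉ² e^{sφ_λ} ∂ₜ|L₀w|² dx dt ≥ -2c² ∫_Ω |L₀w(x,0)|² e^{sφ_λ(x,0)} dx, where ĉ² denotes the odd extension in t of the constant c², i.e. ĉ²(t) = c² for t > 0 and -c² for t < 0. -/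
open MeasureTheory Set


lemma key_aux (c T : ℝ) (hT : 0 < T) (g p : ℝ → ℝ)
    (hg : ContDiff ℝ 1 g) (hp : ContDiff ℝ 1 p) (hpos : ∀ t, 0 < p t)
    (h1 : ∀ t ∈ Set.Ioo (0:ℝ) T, deriv p t < 0)
    (h2 : ∀ t ∈ Set.Ioo (-T) (0:ℝ), 0 < deriv p t) :
    -2 * c ^ 2 * ((g 0) ^ 2 * p 0) ≤
      ∫ t in (-T)..T, (if 0 < t then c ^ 2 else -c ^ 2) * p t *
        deriv (fun τ => (g τ) ^ 2) t := by
  set v : ℝ → ℝ := fun τ => (g τ) ^ 2 with hv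
  have hvC : ContDiff ℝ 1 v := hg.pow 2
  have hvd : ∀ t : ℝ, HasDerivAt v (deriv v t) t :=
    fun t => ((hvC.differentiable one_ne_zero) t).hasDerivAt
  have hpd : ∀ t : ℝ, HasDerivAt p (deriv p t) t :=
    fun t => ((hp.differentiable one_ne_zero) t).hasDerivAt
  have hvc : Continuous (deriv v) := hvC.continuous_deriv le_rfl
  have hpc : Continuous (deriv p) := hp.continuous_deriv le_rfl
  have hii : ∀ a b : ℝ, IntervalIntegrable (fun t => p t * deriv v t) volume a b :=
    fun a b => ((hp.continuous.mul hvc)).intervalIntegrable a b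
  have ibp : ∀ a b : ℝ, ∫ t in a..b, p t * deriv v t =
      p b * v b - p a * v a - ∫ t in a..b, deriv p t * v t := by
    intro a b
    exact intervalIntegral.integral_mul_deriv_eq_deriv_mul
      (fun t _ => hpd t) (fun t _ => hvd t)
      (hpc.intervalIntegrable a b) (hvc.intervalIntegrable a b)
  -- split
  have e1 : ∫ t in (0:ℝ)..T, (if 0 < t then c ^ 2 else -c ^ 2) * p t * deriv v t
      = c ^ 2 * ∫ t in (0:ℝ)..T, p t * deriv v t := by
    rw [← intervalIntegral.integral_const_mul]
    apply intervalIntegral.integral_congr_ae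
    filter_upwards with t ht
    rw [Set.uIoc_of_le hT.le] at ht
    rw [if_pos ht.1]; ring
  have e2 : ∫ t in (-T)..(0:ℝ), (if 0 < t then c ^ 2 else -c ^ 2) * p t * deriv v t
      = -c ^ 2 * ∫ t in (-T)..(0:ℝ), p t * deriv v t := by
    rw [← intervalIntegral.integral_const_mul]
    apply intervalIntegral.integral_congr_ae
    filter_upwards with t ht
    rw [Set.uIoc_of_le (by linarith)] at ht
    rw [if_neg (by linarith [ht.2])]; ring
  have hii1 : IntervalIntegrable
      (fun t => (if 0 < t then c ^ 2 else -c ^ 2) * p t * deriv v t) volume (-T) 0 := by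
    apply ((hp.continuous.mul hvc).intervalIntegrable (-T) 0).const_mul (-c^2) |>.congr_ae
    filter_upwards [ae_restrict_mem measurableSet_uIoc] with t ht
    rw [Set.uIoc_of_le (by linarith : (-T:ℝ) ≤ 0)] at ht
    rw [if_neg (by linarith [ht.2])]; simp only [Pi.mul_apply]; ring
  have hii2 : IntervalIntegrable
      (fun t => (if 0 < t then c ^ 2 else -c ^ 2) * p t * deriv v t) volume 0 T := by
    apply ((hp.continuous.mul hvc).intervalIntegrable 0 T).const_mul (c^2) |>.congr_ae
    filter_upwards [ae_restrict_mem measurableSet_uIoc] with t ht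
    rw [Set.uIoc_of_le hT.le] at ht
    rw [if_pos ht.1]; simp only [Pi.mul_apply]; ring
  rw [← intervalIntegral.integral_add_adjacent_intervals hii1 hii2, e1, e2,
    ibp, ibp]
  -- sign facts
  have hI1 : ∫ t in (0:ℝ)..T, deriv p t * v t ≤ 0 := by
    have hsub : Set.Icc (0:ℝ) T ⊆ {t | deriv p t * v t ≤ 0} := by
      rw [← closure_Ioo hT.ne]
      apply closure_minimal
      · intro t ht
        exact mul_nonpos_of_nonpos_of_nonneg (h1 t ht).le (sq_nonneg _)
      · exact isClosed_le (hpc.mul hvC.continuous) continuous_const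
    have := intervalIntegral.integral_nonneg (f := fun t => -(deriv p t * v t)) (μ := volume)
      hT.le (fun u hu => by simpa using hsub hu)
    rw [intervalIntegral.integral_neg] at this; linarith
  have hI2 : 0 ≤ ∫ t in (-T)..(0:ℝ), deriv p t * v t := by
    apply intervalIntegral.integral_nonneg (by linarith)
    intro u hu
    have hsub : Set.Icc (-T) (0:ℝ) ⊆ {t | 0 ≤ deriv p t * v t} := by
      rw [← closure_Ioo (by linarith : (-T:ℝ) ≠ 0)]
      apply closure_minimal
      · intro t ht
        exact mul_nonneg (h2 t ht).le (sq_nonneg _)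
      · exact isClosed_le continuous_const (hpc.mul hvC.continuous)
    exact hsub hu
  have hb1 : 0 ≤ p T * v T := mul_nonneg (hpos T).le (sq_nonneg _)
  have hb2 : 0 ≤ p (-T) * v (-T) := mul_nonneg (hpos (-T)).le (sq_nonneg _)
  have hc : 0 ≤ c ^ 2 := sq_nonneg c
  have hv0 : v 0 = (g 0) ^ 2 := rfl
  rw [← hv0]
  linarith [mul_nonneg hc hb1, mul_nonneg hc hb2, mul_nonneg hc hI2,
    mul_nonpos_of_nonneg_of_nonpos hc hI1]

/-- Let `G x t = (L₀w)(x,t)` with `w(·,0) = 0` so that `G x 0` is the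
relevant initial value, and let `ψ x t = e^{sφ_λ(x,t)}` satisfy `∂ₜψ < 0` on
`(0,T)` and `∂ₜψ > 0` on `(-T,0)`. Then, with `ĉ²(t) = c²` for `t > 0` and `-c²`
for `t < 0`,
`∫_{-T}^{T}∫_Ω ĉ² ψ ∂ₜ|G|² ≥ -2c² ∫_Ω |G(x,0)|² ψ(x,0)`. -/
theorem stmt_14 {α : Type*} [MeasurableSpace α] (μ : Measure α)
    (c T : ℝ) (hT : 0 < T) (G ψ : α → ℝ → ℝ)
    (hG : ∀ x, ContDiff ℝ 1 (G x)) (hψ : ∀ x, ContDiff ℝ 1 (ψ x))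
    (hψpos : ∀ x t, 0 < ψ x t)
    (hsign₁ : ∀ x, ∀ t ∈ Set.Ioo (0:ℝ) T, deriv (ψ x) t < 0)
    (hsign₂ : ∀ x, ∀ t ∈ Set.Ioo (-T) (0:ℝ), 0 < deriv (ψ x) t)
    (hint : Integrable (fun x => ∫ t in (-T)..T,
      (if 0 < t then c ^ 2 else -c ^ 2) * ψ x t *
        deriv (fun τ => (G x τ) ^ 2) t) μ)
    (hint0 : Integrable (fun x => (G x 0) ^ 2 * ψ x 0) μ) :
    -2 * c ^ 2 * ∫ x, (G x 0) ^ 2 * ψ x 0 ∂μ ≤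
      ∫ x, (∫ t in (-T)..T,
        (if 0 < t then c ^ 2 else -c ^ 2) * ψ x t *
          deriv (fun τ => (G x τ) ^ 2) t) ∂μ := by
  rw [← MeasureTheory.integral_const_mul]
  exact integral_mono (hint0.const_mul _) hint fun x =>
    key_aux c T hT (G x) (ψ x) (hG x) (hψ x) (hψpos x) (hsign₁ x) (hsign₂ x)
end

section
/- If F : [0,T] → ℝ is differentiable with F(t) = ‖L₀u(t)‖² and F'(t) ≤ K for a.e. t where K = (2/c²)sup_τ(‖f(τ)‖² + ‖γu_{tt}(τ)‖²)-type bound, combined with the energy bound ‖γu_{tt}(τ)‖²_{L²} ≤ C(‖f‖²_{L²L²} + Ē(0)), then using |Δu| ≤ |L₀u| + |u_{tt}| pointwise in L², ‖Δu(t)‖²_{L²} ≤ C'(‖f‖²_{L²(0,T;L²)} + Ē(0) + ‖Δu₀‖²_{L²}) for all t ∈ [0,T]. -/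
open MeasureTheory

private lemma aux19 (T C E0 D F X A B ic : ℝ)
    (hsq : X ≤ 2*A + 2*B) (hutt : A ≤ C*(F+E0))
    (hLub : B ≤ C*(E0+D) + ic*(F + T*(C*(F+E0))))
    (key : ic*(F + T*(C*(F+E0))) ≤ (ic + T*C*ic)*(F+E0+D))
    (hCF : 0 ≤ C*F) (hCD : 0 ≤ C*D) :
    X ≤ (4*C + 2*ic + 2*T*C*ic)*(F+E0+D) := by linarith

/-- Bound of the Laplacian of the MGT solution. With `Lu = L₀u`,
`utt = u_tt` and `k = γu_tt` as curves in `L²(Ω)`, suppose the integrated bound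
`‖Lu(t)‖² ≤ ‖Lu(0)‖² + (2/c²)∫₀ᵗ(‖f‖² + ‖k‖²)` holds, together with the energy
bounds `‖k(τ)‖² ≤ C(‖f‖²_{L²L²} + Ē(0))`, `‖utt(τ)‖² ≤ C(‖f‖²_{L²L²} + Ē(0))`
and `‖Lu(0)‖² ≤ C(Ē(0) + ‖Δu₀‖²)`. Then, since `Δu = u_tt - L₀u`,
`‖Δu(t)‖² ≤ C'(‖f‖²_{L²(0,T;L²)} + Ē(0) + ‖Δu₀‖²)` on `[0,T]`. -/
theorem stmt_19 {H : Type*} [NormedAddCommGroup H] [InnerProductSpace ℝ H]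
    (c T C E0 Du0sq : ℝ) (hc : c ≠ 0) (hT : 0 < T) (hC : 0 < C)
    (hE0 : 0 ≤ E0) (hDu0 : 0 ≤ Du0sq)
    (Lu utt f k : ℝ → H)
    (hfint : IntervalIntegrable (fun t => ‖f t‖ ^ 2) volume 0 T)
    (hkint : IntervalIntegrable (fun t => ‖k t‖ ^ 2) volume 0 T)
    (hLu : ∀ t ∈ Set.Icc (0:ℝ) T,
      ‖Lu t‖ ^ 2 ≤ ‖Lu 0‖ ^ 2 +
        (2 / c ^ 2) * ∫ τ in (0:ℝ)..t, (‖f τ‖ ^ 2 + ‖k τ‖ ^ 2))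
    (hk : ∀ τ ∈ Set.Icc (0:ℝ) T,
      ‖k τ‖ ^ 2 ≤ C * ((∫ τ in (0:ℝ)..T, ‖f τ‖ ^ 2) + E0))
    (hutt : ∀ τ ∈ Set.Icc (0:ℝ) T,
      ‖utt τ‖ ^ 2 ≤ C * ((∫ τ in (0:ℝ)..T, ‖f τ‖ ^ 2) + E0))
    (hLu0 : ‖Lu 0‖ ^ 2 ≤ C * (E0 + Du0sq)) :
    ∃ C' > 0, ∀ t ∈ Set.Icc (0:ℝ) T,
      ‖utt t - Lu t‖ ^ 2 ≤
        C' * ((∫ τ in (0:ℝ)..T, ‖f τ‖ ^ 2) + E0 + Du0sq) := by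
  set F : ℝ := ∫ τ in (0:ℝ)..T, ‖f τ‖ ^ 2 with hFdef
  have hc2 : (0:ℝ) < c ^ 2 := by positivity
  have hF0 : 0 ≤ F := intervalIntegral.integral_nonneg hT.le (fun τ _ => by positivity)
  refine ⟨4*C + 4/c^2 + 4*T*C/c^2, by positivity, ?_⟩
  intro t ht
  obtain ⟨ht0, htT⟩ := ht
  have hsub : Set.uIcc (0:ℝ) t ⊆ Set.uIcc 0 T := by
    rw [Set.uIcc_of_le ht0, Set.uIcc_of_le hT.le]
    exact Set.Icc_subset_Icc le_rfl htT
  have hfint' := hfint.mono_set hsub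
  have hkint' := hkint.mono_set hsub
  have hftT : IntervalIntegrable (fun t => ‖f t‖ ^ 2) volume t T := by
    apply hfint.mono_set
    rw [Set.uIcc_of_le htT, Set.uIcc_of_le hT.le]
    exact Set.Icc_subset_Icc ht0 le_rfl
  have hfle : (∫ τ in (0:ℝ)..t, ‖f τ‖ ^ 2) ≤ F := by
    have hadd := intervalIntegral.integral_add_adjacent_intervals hfint' hftT
    have h2 : 0 ≤ ∫ τ in t..T, ‖f τ‖ ^ 2 :=
      intervalIntegral.integral_nonneg htT (fun τ _ => by positivity)
    rw [hFdef, ← hadd]; linarith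
  have hkle : (∫ τ in (0:ℝ)..t, ‖k τ‖ ^ 2) ≤ T * (C * (F + E0)) := by
    have h1 : (∫ τ in (0:ℝ)..t, ‖k τ‖ ^ 2) ≤ ∫ _ in (0:ℝ)..t, C * (F + E0) := by
      apply intervalIntegral.integral_mono_on ht0 hkint' intervalIntegrable_const
      intro τ hτ
      exact hk τ ⟨hτ.1, hτ.2.trans htT⟩
    have h2 : (∫ _ in (0:ℝ)..t, C * (F + E0)) = t * (C * (F + E0)) := by
      simp; ring
    have hCFE : 0 ≤ C * (F + E0) := by positivity
    nlinarith
  have hisum : (∫ τ in (0:ℝ)..t, (‖f τ‖ ^ 2 + ‖k τ‖ ^ 2))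
      = (∫ τ in (0:ℝ)..t, ‖f τ‖ ^ 2) + ∫ τ in (0:ℝ)..t, ‖k τ‖ ^ 2 :=
    intervalIntegral.integral_add hfint' hkint'
  have hLut := hLu t ⟨ht0, htT⟩
  have hutt' := hutt t ⟨ht0, htT⟩
  have htri : ‖utt t - Lu t‖ ≤ ‖utt t‖ + ‖Lu t‖ := norm_sub_le _ _
  have hsq : ‖utt t - Lu t‖ ^ 2 ≤ 2 * ‖utt t‖ ^ 2 + 2 * ‖Lu t‖ ^ 2 := by
    nlinarith [norm_nonneg (utt t - Lu t), norm_nonneg (utt t), norm_nonneg (Lu t),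
      sq_nonneg (‖utt t‖ - ‖Lu t‖)]
  have hLub : ‖Lu t‖ ^ 2 ≤ C * (E0 + Du0sq)
      + (2 / c ^ 2) * (F + T * (C * (F + E0))) := by
    rw [hisum] at hLut
    have h2c : 0 < 2 / c ^ 2 := by positivity
    nlinarith
  have hfin : 0 < 4*C + 4/c^2 + 4*T*C/c^2 := by positivity
  have key : (2 / c ^ 2) * (F + T * (C * (F + E0)))
      ≤ (2/c^2 + T*C*(2/c^2)) * (F + E0 + Du0sq) := by
    have h1 : 0 < (2:ℝ)/c^2 := by positivity
    have hx : F + T*(C*(F+E0)) ≤ (1+T*C)*(F+E0+Du0sq) := by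
      nlinarith [mul_nonneg (mul_nonneg hT.le hC.le) hDu0,
        mul_nonneg (mul_nonneg hT.le hC.le) hE0, mul_pos hT hC]
    calc 2/c^2*(F + T*(C*(F+E0))) ≤ 2/c^2*((1+T*C)*(F+E0+Du0sq)) :=
          mul_le_mul_of_nonneg_left hx h1.le
      _ = (2/c^2 + T*C*(2/c^2))*(F+E0+Du0sq) := by ring
  have hCF : 0 ≤ C * F := mul_nonneg hC.le hF0
  have hCD : 0 ≤ C * Du0sq := mul_nonneg hC.le hDu0
  have heq : (4*C + 4/c^2 + 4*T*C/c^2) * (F + E0 + Du0sq)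
      = (4*C + 2*(2/c^2) + 2*T*C*(2/c^2)) * (F + E0 + Du0sq) := by ring
  rw [heq]
  exact aux19 T C E0 Du0sq F _ _ _ _ hsq hutt' hLub key hCF hCD
end
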